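/- Every edge coloring of a complete graph with no rainbow triangle admits a Gallai partition: a partition of the vertex set into at least two parts such that at most two colors appear on edges between parts and only one color appears between each pair of parts. -/

import Mathlib

open SimpleGraph Finset

/-- A symmetric edge-coloring function. -/
def IsSym {V : Type*} {α : Type*} (c : V → V → α) : Prop := ∀ u v, c u v = c v u

/-- A rainbow triangle: three vertices whose three connecting edges get three distinct colors. -/
def HasRainbowTriangle {V : Type*} {α : Type*} (c : V → V → α) : Prop :=
  ∃ u v w : V, u ≠ v ∧ u ≠ w ∧ v ≠ w ∧ c u v ≠ c u w ∧ c u v ≠ c v w ∧ c u w ≠ c v w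

/-- A Gallai coloring: symmetric with no rainbow triangle. -/
def IsGallai {V : Type*} {α : Type*} (c : V → V → α) : Prop :=
  IsSym c ∧ ¬ HasRainbowTriangle c

/-- A monochromatic copy of `H` in color `i` in the edge-colored complete graph on `V`. -/
def HasMonoCopyIn {V : Type*} {α : Type*} {m : ℕ} (c : V → V → α)
    (H : SimpleGraph (Fin m)) (i : α) : Prop :=
  ∃ f : Fin m → V, Function.Injective f ∧ ∀ u v, H.Adj u v → c (f u) (f v) = i

/-- A monochromatic copy of `H` in color `i` with all vertices inside the set `S`. -/
def HasMonoCopyOn {V : Type*} {α : Type*} {m : ℕ} (c : V → V → α)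
    (H : SimpleGraph (Fin m)) (i : α) (S : Set V) : Prop :=
  ∃ f : Fin m → V, Function.Injective f ∧ (∀ x, f x ∈ S) ∧
    ∀ u v, H.Adj u v → c (f u) (f v) = i

/-- The kipas K̂₄: the join of a single vertex (vertex 4) with the path 0-1-2-3. -/
def kipas4 : SimpleGraph (Fin 5) :=
  SimpleGraph.fromEdgeSet {s(0,1), s(1,2), s(2,3), s(4,0), s(4,1), s(4,2), s(4,3)}

/-- The path on three vertices. -/
def path3 : SimpleGraph (Fin 3) := SimpleGraph.pathGraph 3

/-- Every Gallai `k`-coloring of the complete graph on `n` vertices contains a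
monochromatic copy of `H`. -/
def gallaiRamseyProp (k n : ℕ) {m : ℕ} (H : SimpleGraph (Fin m)) : Prop :=
  ∀ c : Fin n → Fin n → Fin k, IsGallai c → ∃ i, HasMonoCopyIn c H i

/-- The Gallai-Ramsey number `GR_k(H)`. -/
noncomputable def GR (k : ℕ) {m : ℕ} (H : SimpleGraph (Fin m)) : ℕ :=
  sInf {n | gallaiRamseyProp k n H}

section GallaiProof

universe u1 u2
variable {V : Type u1} {α : Type u2}

def GStep (c : V → V → α) (p q : α) (u w : V) : Prop :=
  u ≠ w ∧ c u w ≠ p ∧ c u w ≠ q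

def GRel (c : V → V → α) (p q : α) : V → V → Prop :=
  Relation.ReflTransGen (GStep c p q)

variable {c : V → V → α} {p q : α}

lemma grel_symm (hsym : IsSym c) : Symmetric (GRel c p q) :=
  haveI : Std.Symm (GStep c p q) :=
    ⟨fun _u _w h => ⟨h.1.symm, by rw [hsym]; exact h.2.1, by rw [hsym]; exact h.2.2⟩⟩
  fun a b h => (Relation.ReflTransGen.stdSymm (r := GStep c p q)).symm a b h

lemma no_rainbow (hnr : ¬ HasRainbowTriangle c) {x y z : V}
    (h1 : x ≠ y) (h2 : x ≠ z) (h3 : y ≠ z) :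
    c x y = c x z ∨ c x y = c y z ∨ c x z = c y z := by
  by_contra h
  push_neg at h
  exact hnr ⟨x, y, z, h1, h2, h3, h.1, h.2.1, h.2.2⟩

lemma not_rel_ne {u w : V} (h : ¬ GRel c p q u w) : u ≠ w := by
  rintro rfl; exact h Relation.ReflTransGen.refl

lemma not_rel_color {u w : V} (h : ¬ GRel c p q u w) : c u w = p ∨ c u w = q := by
  by_contra hc
  push_neg at hc
  exact h (Relation.ReflTransGen.single ⟨not_rel_ne h, hc.1, hc.2⟩)

lemma color_const (hnr : ¬ HasRainbowTriangle c) {u w : V} (hw : ¬ GRel c p q u w)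
    {u' : V} (h : GRel c p q u u') : c u' w = c u w := by
  induction h with
  | refl => rfl
  | @tail x y hux hstep ih =>
    have hxw : ¬ GRel c p q x w := fun h' => hw (hux.trans h')
    have hyw : ¬ GRel c p q y w := fun h' => hw ((hux.tail hstep).trans h')
    rcases no_rainbow hnr hstep.1 (not_rel_ne hxw) (not_rel_ne hyw) with h1 | h1 | h1
    · rcases not_rel_color hxw with h2 | h2 <;> rw [h2] at h1
      · exact absurd h1 hstep.2.1
      · exact absurd h1 hstep.2.2
    · rcases not_rel_color hyw with h2 | h2 <;> rw [h2] at h1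
      · exact absurd h1 hstep.2.1
      · exact absurd h1 hstep.2.2
    · rw [← h1]; exact ih

lemma color_const₂ (hsym : IsSym c) (hnr : ¬ HasRainbowTriangle c) {u w u' w' : V}
    (hw : ¬ GRel c p q u w) (hu : GRel c p q u u') (hw' : GRel c p q w w') :
    c u' w' = c u w := by
  have h1 : ¬ GRel c p q u w' := fun h => hw (h.trans (grel_symm hsym hw'))
  have h2 : ¬ GRel c p q w u := fun h => hw (grel_symm hsym h)
  calc c u' w' = c u w' := color_const hnr h1 hu
    _ = c w' u := hsym _ _
    _ = c w u := color_const hnr h2 hw'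
    _ = c u w := hsym _ _

lemma not_rel_of_closed {S : Set V} (hcl : ∀ a ∈ S, ∀ b, b ∉ S → ¬ GStep c p q a b)
    {x y : V} (hx : x ∈ S) (hy : y ∉ S) : ¬ GRel c p q x y := by
  have key : ∀ b, GRel c p q x b → b ∈ S := by
    intro b h
    induction h with
    | refl => exact hx
    | @tail m b hxm hstep ih =>
      by_contra hb
      exact hcl m ih b hb hstep
  exact fun h => hy (key y h)

lemma lift_not_rel {v : V} (hsym : IsSym c) {w y : {x : V // x ≠ v}}
    (hγ : ∀ a : {x : V // x ≠ v},
      GRel (fun a b : {x : V // x ≠ v} => c a.1 b.1) p q w a → c v a.1 = p ∨ c v a.1 = q)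
    (hwy : ¬ GRel (fun a b : {x : V // x ≠ v} => c a.1 b.1) p q w y) :
    ¬ GRel c p q w.1 y.1 := by
  set c' : {x : V // x ≠ v} → {x : V // x ≠ v} → α := fun a b => c a.1 b.1 with hc'
  refine not_rel_of_closed (S := {x : V | ∃ h : x ≠ v, GRel c' p q w ⟨x, h⟩}) ?_ ?_ ?_
  · rintro a ⟨ha, hrel⟩ b hb hstep
    by_cases hbv : b = v
    · subst hbv
      have := hγ ⟨a, ha⟩ hrel
      rw [← hsym] at this
      rcases this with h | h
      · exact hstep.2.1 h
      · exact hstep.2.2 h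
    · have hbrel : ¬ GRel c' p q w ⟨b, hbv⟩ := fun h => hb ⟨hbv, h⟩
      have hab : ¬ GRel c' p q (⟨a, ha⟩ : {x : V // x ≠ v}) ⟨b, hbv⟩ :=
        fun h => hbrel (hrel.trans h)
      rcases not_rel_color hab with h | h
      · exact hstep.2.1 h
      · exact hstep.2.2 h
  · exact ⟨w.2, Relation.ReflTransGen.refl⟩
  · rintro ⟨h, hrel⟩
    exact hwy hrel

end GallaiProof

section MainInduction

universe u1 u2
variable {α : Type u2}

lemma gallai_disconn : ∀ (n : ℕ) (V : Type u1) (_ : Fintype V) (_ : DecidableEq V)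
    (c : V → V → α), IsSym c → ¬ HasRainbowTriangle c →
    2 ≤ Fintype.card V → Fintype.card V = n →
    ∃ p q : α, ∃ x y : V, ¬ GRel c p q x y := by
  intro n
  induction n using Nat.strong_induction_on with
  | _ n ih =>
    intro V instF instD c hsym hnr h2 hn
    letI := instF
    letI := instD
    obtain ⟨v⟩ : Nonempty V := Fintype.card_pos_iff.mp (by omega)
    by_cases hI : ∃ p q : α, ∀ u : V, u ≠ v → c v u = p ∨ c v u = q
    · obtain ⟨p, q, h⟩ := hI
      obtain ⟨u, hu⟩ := Fintype.exists_ne_of_one_lt_card (by omega) v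
      refine ⟨p, q, v, u, fun hr => ?_⟩
      rcases Relation.ReflTransGen.cases_head hr with heq | ⟨x, hs, _⟩
      · exact hu heq.symm
      · rcases h x hs.1.symm with h' | h'
        · exact hs.2.1 h'
        · exact hs.2.2 h'
    · push_neg at hI
      -- hI : ∀ p q, ∃ u, u ≠ v ∧ c v u ≠ p ∧ c v u ≠ q
      set V' := {x : V // x ≠ v} with hV'
      set c' : V' → V' → α := fun a b => c a.1 b.1 with hc'
      have hsym' : IsSym c' := fun a b => hsym a.1 b.1
      have hnr' : ¬ HasRainbowTriangle c' := by
        rintro ⟨a, b, d, h1, h2', h3, h4, h5, h6⟩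
        exact hnr ⟨a.1, b.1, d.1, fun h => h1 (Subtype.ext h), fun h => h2' (Subtype.ext h),
          fun h => h3 (Subtype.ext h), h4, h5, h6⟩
      obtain ⟨u₁, hu₁⟩ := Fintype.exists_ne_of_one_lt_card (by omega) v
      obtain ⟨u₂, hu₂v, hu₂⟩ := hI (c v u₁) (c v u₁)
      have hcard : Fintype.card V' = n - 1 := by
        have h1 : Fintype.card V' = Fintype.card V - 1 := by
          have h := Fintype.card_subtype_compl (fun x : V => x = v)
          rw [Fintype.card_subtype_eq] at h
          exact h
        omega
      have h2' : 2 ≤ Fintype.card V' := by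
        have hne : (⟨u₁, hu₁⟩ : V') ≠ ⟨u₂, hu₂v⟩ := by
          intro h
          rw [Subtype.mk.injEq] at h
          exact hu₂.1 (by rw [h])
        have : Nontrivial V' := ⟨_, _, hne.symm⟩
        exact Fintype.one_lt_card_iff_nontrivial.mpr this
      haveI : DecidableEq V' := Classical.decEq _
      obtain ⟨p, q, u₀, w₀, hd⟩ := ih (n - 1) (by omega) V' inferInstance (Classical.decEq _) c' hsym' hnr' h2' hcard
      obtain ⟨z, hzv, hzp, hzq⟩ := hI p q
      set z' : V' := ⟨z, hzv⟩ with hz'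
      by_cases hmono : ∀ a b : V', GRel c' p q a b → c v a.1 = c v b.1
      · -- Case II.1 : v is monochromatic towards each class
        obtain ⟨w, hzw⟩ : ∃ w : V', ¬ GRel c' p q z' w := by
          by_cases hzu : GRel c' p q z' u₀
          · exact ⟨w₀, fun h => hd ((grel_symm hsym' hzu).trans h)⟩
          · exact ⟨u₀, hzu⟩
        by_cases hex : ∃ w' : V', ¬ GRel c' p q z' w' ∧ (c v w'.1 = p ∨ c v w'.1 = q)
        · obtain ⟨w', hzw', hwpq⟩ := hex
          refine ⟨p, q, w'.1, z, ?_⟩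
          have := lift_not_rel (v := v) hsym
            (w := w') (y := z')
            (fun a hrel => by rw [← hmono w' a hrel]; exact hwpq)
            (fun h => hzw' (grel_symm hsym' h))
          exact this
        · exfalso
          push_neg at hex
          obtain ⟨u, huv, hne1, _⟩ := hI (c v z) (c v z)
          apply hne1
          by_cases hr : GRel c' p q z' (⟨u, huv⟩ : V')
          · exact (hmono z' ⟨u, huv⟩ hr).symm
          · have hcu := hex ⟨u, huv⟩ hr
            have hzu : c z u = p ∨ c z u = q := not_rel_color (c := c') hr
            have hzune : z ≠ u := fun h => (not_rel_ne hr) (Subtype.ext h)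
            rcases no_rainbow hnr (Ne.symm hzv) (Ne.symm huv) hzune with h1 | h1 | h1
            · exact h1.symm
            · rcases hzu with h2 | h2 <;> rw [h2] at h1
              · exact absurd h1 hzp
              · exact absurd h1 hzq
            · rcases hzu with h2 | h2 <;> rw [h2] at h1
              · exact absurd h1 hcu.1
              · exact absurd h1 hcu.2
      · -- Case II.2 : v is non-monochromatic on some class
        push_neg at hmono
        obtain ⟨b₁, b₂, hb12, hbne⟩ := hmono
        obtain ⟨w₁, hbw₁⟩ : ∃ w : V', ¬ GRel c' p q b₁ w := by
          by_cases hbu : GRel c' p q b₁ u₀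
          · exact ⟨w₀, fun h => hd ((grel_symm hsym' hbu).trans h)⟩
          · exact ⟨u₀, hbu⟩
        by_cases hB : ∃ w : V', ¬ GRel c' p q b₁ w ∧ c v w.1 ≠ c b₁.1 w.1
        · -- Case II.2.B
          obtain ⟨w₂, hbw₂, hne₂⟩ := hB
          have hdpq : c b₁.1 w₂.1 = p ∨ c b₁.1 w₂.1 = q := not_rel_color (c := c') hbw₂
          have G1 : ∀ u : V', GRel c' p q b₁ u →
              c v u.1 = c b₁.1 w₂.1 ∨ c v u.1 = c v w₂.1 := by
            intro u hu
            have hcuw : c u.1 w₂.1 = c b₁.1 w₂.1 := color_const (c := c') hnr' hbw₂ hu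
            have huw : u.1 ≠ w₂.1 := fun h => hbw₂ (by rwa [show u = w₂ from Subtype.ext h] at hu)
            rcases no_rainbow hnr (Ne.symm u.2) (Ne.symm w₂.2) huw with h1 | h1 | h1
            · exact Or.inr h1
            · rw [hcuw] at h1; exact Or.inl h1
            · rw [hcuw] at h1; exact absurd h1 hne₂
          obtain ⟨y, hyv, hfd, hfe⟩ := hI (c b₁.1 w₂.1) (c v w₂.1)
          set y' : V' := ⟨y, hyv⟩ with hy'
          have hby : ¬ GRel c' p q b₁ y' := by
            intro h
            rcases G1 y' h with h' | h'
            · exact hfd h'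
            · exact hfe h'
          have hdy : c b₁.1 y = p ∨ c b₁.1 y = q := not_rel_color (c := c') hby
          have G2 : c b₁.1 y = c v y := by
            by_contra hG2
            have key : ∀ u : V', GRel c' p q b₁ u → c v u.1 = c b₁.1 y := by
              intro u hu
              have hcu : c u.1 y = c b₁.1 y := color_const (c := c') hnr' hby hu
              have huy : u.1 ≠ y := fun h => hby (by rwa [show u = y' from Subtype.ext h] at hu)
              rcases no_rainbow hnr (Ne.symm u.2) (Ne.symm hyv) huy with h1 | h1 | h1
              · exfalso
                rcases G1 u hu with h' | h' <;> rw [h'] at h1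
                · exact hfd h1.symm
                · exact hfe h1.symm
              · exact h1.trans hcu
              · exact absurd (hcu.symm.trans h1.symm) hG2
            have := (key b₁ Relation.ReflTransGen.refl).trans (key b₂ hb12).symm
            exact hbne this
          have G3 : ∀ a : V', GRel c' p q y' a → c v a.1 = p ∨ c v a.1 = q := by
            intro a hya
            have hba : ¬ GRel c' p q b₁ a := fun h => hby (h.trans (grel_symm hsym' hya))
            suffices hsuf : c v a.1 = c v y by
              rw [hsuf, ← G2]; exact hdy
            by_contra haf
            have hca : c b₁.1 a.1 = c b₁.1 y :=
              color_const₂ (c := c') hsym' hnr' hby (Relation.ReflTransGen.refl) hya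
            have key : ∀ u : V', GRel c' p q b₁ u → c v u.1 = c v a.1 := by
              intro u hu
              have hcua : c u.1 a.1 = c b₁.1 a.1 := color_const (c := c') hnr' hba hu
              have hua : u.1 ≠ a.1 := fun h => hba (by rwa [show u = a from Subtype.ext h] at hu)
              rcases no_rainbow hnr (Ne.symm u.2) (Ne.symm a.2) hua with h1 | h1 | h1
              · exact h1
              · exfalso
                rw [hcua, hca, G2] at h1
                rcases G1 u hu with h' | h' <;> rw [h'] at h1
                · exact hfd h1.symm
                · exact hfe h1.symm
              · exact absurd (h1.trans (hcua.trans (hca.trans G2))) haf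
            exact hbne ((key b₁ Relation.ReflTransGen.refl).trans (key b₂ hb12).symm)
          refine ⟨p, q, y, b₁.1, ?_⟩
          exact lift_not_rel (v := v) hsym (w := y') (y := b₁) G3
            (fun h => hby (grel_symm hsym' h))
        · -- Case II.2.A
          push_neg at hB
          refine ⟨p, q, w₁.1, b₁.1, ?_⟩
          refine lift_not_rel (v := v) hsym (w := w₁) (y := b₁) ?_
            (fun h => hbw₁ (grel_symm hsym' h))
          intro a hrel
          have hba : ¬ GRel c' p q b₁ a := fun h => hbw₁ (h.trans (grel_symm hsym' hrel))
          rw [hB a hba]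
          exact not_rel_color (c := c') hba

end MainInduction


/-- Gallai's theorem: every edge coloring of a finite complete graph with no rainbow
triangle admits a Gallai partition. -/
theorem gallai_partition {V : Type*} [Fintype V] [DecidableEq V] {α : Type*}
    (c : V → V → α) (hsym : IsSym c) (hnr : ¬ HasRainbowTriangle c)
    (hV : 2 ≤ Fintype.card V) :
    ∃ P : Finpartition (Finset.univ : Finset V),
      2 ≤ P.parts.card ∧
      (∃ c₁ c₂ : α, ∀ A ∈ P.parts, ∀ B ∈ P.parts, A ≠ B →
        ∀ a ∈ A, ∀ b ∈ B, c a b = c₁ ∨ c a b = c₂) ∧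
      (∀ A ∈ P.parts, ∀ B ∈ P.parts, A ≠ B →
        ∃ d : α, ∀ a ∈ A, ∀ b ∈ B, c a b = d) := by
  classical
  obtain ⟨p, q, x₀, y₀, hd⟩ :=
    gallai_disconn (Fintype.card V) V inferInstance inferInstance c hsym hnr hV rfl
  let s : Setoid V := ⟨GRel c p q,
    ⟨fun _ => Relation.ReflTransGen.refl, fun h => grel_symm hsym h, fun h h' => h.trans h'⟩⟩
  haveI : DecidableRel s.r := fun _ _ => Classical.dec _
  let P : Finpartition (Finset.univ : Finset V) := Finpartition.ofSetoid s
  have hrel_of_mem : ∀ {A : Finset V}, A ∈ P.parts → ∀ {a b : V}, a ∈ A → b ∈ A →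
      GRel c p q a b := by
    intro A hA a b ha hb
    have h1 : P.part a = A := P.part_eq_of_mem hA ha
    have hb' : b ∈ P.part a := h1 ▸ hb
    exact (Finpartition.mem_part_ofSetoid_iff_rel).mp hb'
  have hnotrel : ∀ {A B : Finset V}, A ∈ P.parts → B ∈ P.parts → A ≠ B →
      ∀ {a b : V}, a ∈ A → b ∈ B → ¬ GRel c p q a b := by
    intro A B hA hB hAB a b ha hb hr
    have h1 : P.part a = A := P.part_eq_of_mem hA ha
    have hbA : b ∈ P.part a := (Finpartition.mem_part_ofSetoid_iff_rel).mpr hr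
    rw [h1] at hbA
    exact hAB (P.eq_of_mem_parts hA hB hbA hb)
  refine ⟨P, ?_, ⟨p, q, ?_⟩, ?_⟩
  · refine Finset.one_lt_card.mpr ⟨P.part x₀, P.part_mem.mpr (Finset.mem_univ x₀),
      P.part y₀, P.part_mem.mpr (Finset.mem_univ y₀), ?_⟩
    intro h
    have hy : y₀ ∈ P.part x₀ := h ▸ P.mem_part (Finset.mem_univ y₀)
    exact hd ((Finpartition.mem_part_ofSetoid_iff_rel).mp hy)
  · intro A hA B hB hAB a ha b hb
    exact not_rel_color (hnotrel hA hB hAB ha hb)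
  · intro A hA B hB hAB
    obtain ⟨a₀, ha₀⟩ := P.nonempty_of_mem_parts hA
    obtain ⟨b₀, hb₀⟩ := P.nonempty_of_mem_parts hB
    exact ⟨c a₀ b₀, fun a ha b hb =>
      color_const₂ hsym hnr (hnotrel hA hB hAB ha₀ hb₀) (hrel_of_mem hA ha₀ ha)
        (hrel_of_mem hB hb₀ hb)⟩
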